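/- Let R be an integral domain in which 2 is invertible and let A be an R-algebra that is free of rank 4 as an R-module. Then the following are equivalent: (a) there exists an R-linear map tr : A → R with tr(r·1) = 2r for all r ∈ R and such that every a ∈ A satisfies a·a − tr(a)·a + g·1 = 0 for some g ∈ R; (b) there exists an R-submodule S ⊆ A such that A is the internal direct sum of R·1 and S as R-modules and x·x ∈ R·1 for every x ∈ S. -/

import Mathlib

theorem stmt3 (R A : Type*) [CommRing R] [IsDomain R] [Invertible (2 : R)]
    [Ring A] [Algebra R A] [Module.Free R A] (hrank : Module.finrank R A = 4) :
    (∃ tr : A →ₗ[R] R,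
        (∀ r : R, tr (algebraMap R A r) = 2 * r) ∧
        ∀ a : A, ∃ g : R, a * a - tr a • a + algebraMap R A g = 0) ↔
    (∃ S : Submodule R A,
        IsCompl (1 : Submodule R A) S ∧
        ∀ x ∈ S, x * x ∈ (1 : Submodule R A)) := by
  constructor
  · rintro ⟨tr, htr1, htr2⟩
    refine ⟨LinearMap.ker tr, ⟨?_, ?_⟩, ?_⟩
    · rw [disjoint_iff_inf_le]
      rintro x ⟨hx1, hx2⟩
      obtain ⟨r, rfl⟩ := Submodule.mem_one.mp hx1
      have : (2 : R) * r = 0 := by rw [← htr1 r]; exact hx2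
      have hr : r = 0 := by
        have := congrArg (⅟(2:R) * ·) this
        simpa [← mul_assoc] using this
      simp [hr]
    · rw [codisjoint_iff_le_sup]
      intro a _
      have h1 : algebraMap R A (⅟(2:R) * tr a) ∈ (1 : Submodule R A) :=
        Submodule.mem_one.mpr ⟨_, rfl⟩
      have h2 : a - algebraMap R A (⅟(2:R) * tr a) ∈ LinearMap.ker tr := by
        rw [LinearMap.mem_ker, map_sub, htr1, ← mul_assoc, mul_invOf_self, one_mul, sub_self]
      have := Submodule.add_mem_sup h1 h2
      simpa using this
    · intro x hx
      obtain ⟨g, hg⟩ := htr2 x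
      have hx0 : tr x = 0 := hx
      rw [hx0, zero_smul, sub_zero] at hg
      refine Submodule.mem_one.mpr ⟨-g, ?_⟩
      rw [map_neg]
      linear_combination (norm := module) -hg
  · rintro ⟨S, hc, hsq⟩
    have hnt : Nontrivial A := by
      have : 0 < Module.finrank R A := by omega
      exact Module.nontrivial_of_finrank_pos this
    have hinj : Function.Injective (Algebra.linearMap R A) :=
      FaithfulSMul.algebraMap_injective R A
    set e : R ≃ₗ[R] LinearMap.range (Algebra.linearMap R A) :=
      LinearEquiv.ofInjective _ hinj with he
    set eq1 : (1 : Submodule R A) ≃ₗ[R] LinearMap.range (Algebra.linearMap R A) :=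
      LinearEquiv.ofEq _ _ (Submodule.one_eq_range) with heq1
    set proj : A →ₗ[R] (1 : Submodule R A) := (1 : Submodule R A).linearProjOfIsCompl S hc
      with hprojdef
    set c : A →ₗ[R] R := e.symm.toLinearMap ∘ₗ eq1.toLinearMap ∘ₗ proj with hcdef
    have hcval : ∀ r : R, c (algebraMap R A r) = r := by
      intro r
      have hm : algebraMap R A r ∈ (1 : Submodule R A) := Submodule.mem_one.mpr ⟨r, rfl⟩
      have hproj : proj (algebraMap R A r) = ⟨algebraMap R A r, hm⟩ :=
        Submodule.linearProjOfIsCompl_apply_left hc ⟨algebraMap R A r, hm⟩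
      simp only [hcdef, LinearMap.comp_apply, hproj]
      have hkey : e r = eq1 ⟨algebraMap R A r, hm⟩ := by
        apply Subtype.ext
        simp [he, heq1, LinearEquiv.ofInjective_apply]
      simp only [LinearEquiv.coe_coe]
      rw [← hkey]
      simp
    have hczero : ∀ s ∈ S, c s = 0 := by
      intro s hs
      simp only [hcdef, LinearMap.comp_apply]
      have : proj s = 0 := Submodule.linearProjOfIsCompl_apply_right hc ⟨s, hs⟩
      rw [this]; simp
    refine ⟨2 • c, ?_, ?_⟩
    · intro r
      simp [hcval, two_mul, two_smul]
    · intro a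
      obtain ⟨p, s, hps, -⟩ := Submodule.existsUnique_add_of_isCompl hc a
      obtain ⟨r, hr⟩ := Submodule.mem_one.mp p.2
      obtain ⟨t, ht⟩ := Submodule.mem_one.mp (hsq _ s.2)
      have ha : a = algebraMap R A r + (s : A) := by rw [← hps, hr]
      have hca : c a = r := by
        rw [ha, map_add, hcval, hczero _ s.2, add_zero]
      refine ⟨r * r - t, ?_⟩
      have h2 : ((2 • c) a) • a = (2 * r) • a := by
        simp [hca, two_smul, two_mul, add_smul]
      rw [h2, ha]
      have hss : (s : A) * s = algebraMap R A t := ht.symm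
      have hexp : (algebraMap R A r + (s : A)) * (algebraMap R A r + (s : A))
          = algebraMap R A r * algebraMap R A r
            + (algebraMap R A r * (s : A) + algebraMap R A r * (s : A))
            + algebraMap R A t := by
        rw [add_mul, mul_add, mul_add, hss, ← Algebra.commutes r (s : A)]
        abel
      have hsm : (2 * r) • (algebraMap R A r + (s : A))
          = (algebraMap R A r * algebraMap R A r + algebraMap R A r * algebraMap R A r)
            + (algebraMap R A r * (s : A) + algebraMap R A r * (s : A)) := by
        rw [mul_smul, two_smul, smul_add]
        simp only [Algebra.smul_def]
        abel
      rw [hexp, hsm, map_sub, map_mul]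
      abel
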